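/- Let m ≥ 1 and let G = C₄ᵐ × C₂ with generators a₁,…,a_m of the order-4 factors and h of the order-2 factor. In 𝔽₂[G], let u_m = ∏_{i=1}^{m} (a_i + a_i² + a_i³) and u = 1 + h·u_m, and let 𝒞 be the code generated by u. Then 𝒞 is self-dual: 𝒞 equals its orthogonal complement with respect to the coefficientwise bilinear form ⟨x, y⟩ = Σ_{g∈G} x_g·y_g on 𝔽₂[G]. -/

import Mathlib

noncomputable section

open MonoidAlgebra

/-- The code generated by `u` in a group algebra: the `R`-span of `{g • u : g ∈ G}`. -/
def codeGen {R : Type*} [CommSemiring R] {G : Type*} [Monoid G]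
    (u : MonoidAlgebra R G) : Submodule R (MonoidAlgebra R G) :=
  Submodule.span R (Set.range fun g : G => MonoidAlgebra.of R G g * u)

/-- The weight (support size) of an element of a group algebra. -/
def wt {R : Type*} [Semiring R] {G : Type*} (x : MonoidAlgebra R G) : ℕ :=
  x.coeff.support.card

/-- The minimum distance of the code generated by `u`: the least weight of a nonzero
element of the code. -/
def minDist {R : Type*} [CommSemiring R] {G : Type*} [Monoid G]
    (u : MonoidAlgebra R G) : ℕ :=
  sInf {n | ∃ x ∈ codeGen u, x ≠ 0 ∧ wt x = n}

/-- The group `C₄ᵐ × C₂`, written multiplicatively. -/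
abbrev Gp (m : ℕ) : Type := Multiplicative ((Fin m → ZMod 4) × ZMod 2)

/-- The generator `aᵢ` of the `i`-th copy of `C₄`. -/
def agen (m : ℕ) (i : Fin m) : Gp m := Multiplicative.ofAdd (Pi.single i 1, 0)

/-- The generator `h` of the `C₂` factor. -/
def hgen (m : ℕ) : Gp m := Multiplicative.ofAdd (0, 1)

/-- `u_m = ∏ᵢ (aᵢ + aᵢ² + aᵢ³)` in `𝔽₂[C₄ᵐ × C₂]`. -/
def um (m : ℕ) : MonoidAlgebra (ZMod 2) (Gp m) :=
  ∏ i : Fin m,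
    (of (ZMod 2) (Gp m) (agen m i) + of (ZMod 2) (Gp m) (agen m i) ^ 2 +
      of (ZMod 2) (Gp m) (agen m i) ^ 3)

/-- `u = 1 + h·u_m`. -/
def uu (m : ℕ) : MonoidAlgebra (ZMod 2) (Gp m) :=
  1 + of (ZMod 2) (Gp m) (hgen m) * um m

/-- The coefficientwise bilinear form `⟨x, y⟩ = ∑_g x_g · y_g` on a group algebra. -/
def bform {R : Type*} [Semiring R] {G : Type*} (x y : MonoidAlgebra R G) : R :=
  x.coeff.sum fun g c => c * y.coeff g

namespace SelfDualAux

variable (m : ℕ)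

abbrev R (m : ℕ) := MonoidAlgebra (ZMod 2) (Gp m)

lemma two_eq_zero : (2 : R m) = 0 := by
  have h1 : (2 : R m) = 1 + 1 := one_add_one_eq_two.symm
  rw [h1, MonoidAlgebra.one_def, ← MonoidAlgebra.single_add,
    show (1 + 1 : ZMod 2) = 0 by decide]
  exact MonoidAlgebra.single_zero 1

lemma char2 (x : R m) : x + x = 0 := by
  rw [← two_smul (ZMod 2) x, show (2 : ZMod 2) = 0 by decide, zero_smul]

/-- the parity predicate : even elements -/
def ev (g : Gp m) : Prop := (Multiplicative.toAdd g).2 = 0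

instance : DecidablePred (ev m) := fun _ => inferInstanceAs (Decidable (_ = _))

/-- even part -/
def Ef (x : R m) : R m := MonoidAlgebra.ofCoeff (x.coeff.filter (ev m))

/-- odd part -/
def Df (x : R m) : R m := MonoidAlgebra.ofCoeff (x.coeff.filter (fun g => ¬ ev m g))

lemma E_add_D (x : R m) : Ef m x + Df m x = x :=
  MonoidAlgebra.ext (Finsupp.filter_pos_add_filter_neg x.coeff (ev m))

lemma ev_mul_even {g g' : Gp m} (h : ev m g') : ev m (g * g') ↔ ev m g := by
  unfold ev at *
  rw [toAdd_mul, Prod.snd_add, h, add_zero]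

lemma ev_mul_odd {g g' : Gp m} (h : ¬ ev m g') : (¬ ev m (g * g')) ↔ ev m g := by
  unfold ev at *
  rw [toAdd_mul, Prod.snd_add]
  revert h
  generalize (Multiplicative.toAdd g).2 = x
  generalize (Multiplicative.toAdd g').2 = y
  revert x y; decide

lemma Df_add (x y : R m) : Df m (x + y) = Df m x + Df m y := MonoidAlgebra.ext Finsupp.filter_add

lemma Ef_add (x y : R m) : Ef m (x + y) = Ef m x + Ef m y := MonoidAlgebra.ext Finsupp.filter_add

lemma Df_zero : Df m 0 = 0 := MonoidAlgebra.ext (Finsupp.filter_zero _)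

lemma Ef_zero : Ef m 0 = 0 := MonoidAlgebra.ext (Finsupp.filter_zero _)

lemma D_mul_even (g' : Gp m) (hg' : ev m g') (s : ZMod 2) (x : R m) :
    Df m (x * MonoidAlgebra.single g' s) = Df m x * MonoidAlgebra.single g' s := by
  induction x using MonoidAlgebra.induction_linear with
  | zero => rw [zero_mul, Df_zero, zero_mul]
  | add f g hf hg => rw [
      add_mul, Df_add, Df_add, hf, hg, add_mul]
  | single g r =>
      rw [MonoidAlgebra.single_mul_single]
      by_cases hg : ev m g
      · simp only [Df, MonoidAlgebra.coeff_single]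
        rw [
          Finsupp.filter_single_of_neg (p := fun g => ¬ ev m g)
            (not_not_intro ((ev_mul_even m hg').mpr hg)),
          Finsupp.filter_single_of_neg (p := fun g => ¬ ev m g) (not_not_intro hg),
          MonoidAlgebra.ofCoeff_zero, zero_mul]
      · simp only [Df, MonoidAlgebra.coeff_single]
        rw [
          Finsupp.filter_single_of_pos (p := fun g => ¬ ev m g) ((ev_mul_even m hg').not.mpr hg),
          Finsupp.filter_single_of_pos (p := fun g => ¬ ev m g) hg,
          MonoidAlgebra.ofCoeff_single, MonoidAlgebra.ofCoeff_single,
          MonoidAlgebra.single_mul_single]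

lemma D_mul_odd (g' : Gp m) (hg' : ¬ ev m g') (s : ZMod 2) (x : R m) :
    Df m (x * MonoidAlgebra.single g' s) = Ef m x * MonoidAlgebra.single g' s := by
  induction x using MonoidAlgebra.induction_linear with
  | zero => rw [zero_mul, Df_zero,
      Ef_zero, zero_mul]
  | add f g hf hg => rw [
      add_mul, Df_add, Ef_add, hf, hg, add_mul]
  | single g r =>
      rw [MonoidAlgebra.single_mul_single]
      by_cases hg : ev m g
      · simp only [Df, Ef, MonoidAlgebra.coeff_single]
        rw [
          Finsupp.filter_single_of_pos (p := fun g => ¬ ev m g) ((ev_mul_odd m hg').mpr hg),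
          Finsupp.filter_single_of_pos (p := ev m) hg,
          MonoidAlgebra.ofCoeff_single, MonoidAlgebra.ofCoeff_single,
          MonoidAlgebra.single_mul_single]
      · simp only [Df, Ef, MonoidAlgebra.coeff_single]
        rw [
          Finsupp.filter_single_of_neg (p := fun g => ¬ ev m g)
            (fun hc => hg ((ev_mul_odd m hg').mp hc)),
          Finsupp.filter_single_of_neg (p := ev m) hg,
          MonoidAlgebra.ofCoeff_zero, zero_mul]

lemma ev_one : ev m (1 : Gp m) := rfl

lemma ev_agen (i : Fin m) : ev m (agen m i) := rfl

lemma ev_pow {g : Gp m} (hg : ev m g) (k : ℕ) : ev m (g ^ k) := by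
  induction k with
  | zero => exact ev_one m
  | succ n ih => rw [pow_succ]; exact (ev_mul_even m hg).mpr ih

lemma hodd : ¬ ev m (hgen m) := by
  unfold ev hgen
  exact one_ne_zero

lemma agen_pow_four (i : Fin m) : agen m i ^ 4 = 1 := by
  have hz : (((Pi.single i 1, 0) : (Fin m → ZMod 4) × ZMod 2) + (Pi.single i 1, 0)) +
      ((Pi.single i 1, 0) + (Pi.single i 1, 0)) = 0 := by
    simp only [Prod.mk_add_mk, Prod.mk_eq_zero]
    constructor
    · funext j
      simp only [Pi.add_apply, Pi.single_apply, Pi.zero_apply]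
      by_cases hj : j = i
      · rw [if_pos hj]; decide
      · rw [if_neg hj]; decide
    · decide
  show agen m i ^ (2 + 2) = 1
  unfold agen
  rw [pow_add, pow_two, ← ofAdd_add, ← ofAdd_add, hz]
  rfl

lemma hgen_sq : hgen m ^ 2 = 1 := by
  have hz : ((0, 1) : (Fin m → ZMod 4) × ZMod 2) + (0, 1) = 0 := by
    simp only [Prod.mk_add_mk, Prod.mk_eq_zero]
    exact ⟨by simp, by decide⟩
  unfold hgen
  rw [pow_two, ← ofAdd_add, hz]
  rfl

/-- the inversion ring homomorphism -/
def invol : R m →+* R m :=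
  MonoidAlgebra.mapDomainRingHom (ZMod 2) (invMonoidHom : Gp m →* Gp m)

lemma invol_single (g : Gp m) (r : ZMod 2) :
    invol m (MonoidAlgebra.single g r) = MonoidAlgebra.single g⁻¹ r := by
  simp [invol, Finsupp.mapDomain_single]

lemma invol_of (g : Gp m) : invol m (of (ZMod 2) (Gp m) g) = of (ZMod 2) (Gp m) g⁻¹ := by
  rw [MonoidAlgebra.of_apply, MonoidAlgebra.of_apply, invol_single]

lemma invol_apply_inv (y : R m) (g : Gp m) : (invol m y).coeff g⁻¹ = y.coeff g := by
  have : (invol m y).coeff = Finsupp.mapDomain (fun a : Gp m => a⁻¹) y.coeff := rfl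
  rw [this, show (g⁻¹ : Gp m) = (fun a : Gp m => a⁻¹) g from rfl,
    Finsupp.mapDomain_apply inv_injective y.coeff g]

lemma invol_invol (y : R m) : invol m (invol m y) = y := by
  have h1 : ∀ z : R m, (invol m z).coeff = Finsupp.mapDomain (fun a : Gp m => a⁻¹) z.coeff :=
    fun _ => rfl
  apply MonoidAlgebra.ext
  rw [h1, h1, ← Finsupp.mapDomain_comp]
  simp [Function.comp_def]

lemma invol_um : invol m (um m) = um m := by
  unfold um
  rw [map_prod]
  refine Finset.prod_congr rfl fun i _ => ?_
  set a := agen m i with ha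
  have h4 : a ^ 4 = 1 := agen_pow_four m i
  have hinv1 : a⁻¹ = a ^ 3 := inv_eq_of_mul_eq_one_right (by rw [← pow_succ']; exact h4)
  have hinv2 : (a ^ 2)⁻¹ = a ^ 2 := inv_eq_of_mul_eq_one_right (by rw [← pow_add]; exact h4)
  have hinv3 : (a ^ 3)⁻¹ = a := inv_eq_of_mul_eq_one_right (by rw [← pow_succ]; exact h4)
  rw [map_add, map_add, map_pow, map_pow, invol_of]
  have t2 : of (ZMod 2) (Gp m) a⁻¹ ^ 2 = of (ZMod 2) (Gp m) (a ^ 2) := by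
    rw [← map_pow, inv_pow, hinv2]
  have t3 : of (ZMod 2) (Gp m) a⁻¹ ^ 3 = of (ZMod 2) (Gp m) a := by
    rw [← map_pow, inv_pow, hinv3]
  rw [t2, t3, hinv1]
  rw [show of (ZMod 2) (Gp m) (agen m i) ^ 2 = of (ZMod 2) (Gp m) (agen m i ^ 2) from
      (map_pow _ _ _).symm,
    show of (ZMod 2) (Gp m) (agen m i) ^ 3 = of (ZMod 2) (Gp m) (agen m i ^ 3) from
      (map_pow _ _ _).symm, ← ha]
  ring

lemma hgen_inv : (hgen m)⁻¹ = hgen m :=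
  inv_eq_of_mul_eq_one_right (by rw [← pow_two]; exact hgen_sq m)

lemma invol_uu : invol m (uu m) = uu m := by
  unfold uu
  rw [map_add, map_one, map_mul, invol_of, hgen_inv, invol_um]

lemma bform_single (g : Gp m) (r : ZMod 2) (y : R m) :
    bform (MonoidAlgebra.single g r) y = r * y.coeff g :=
  Finsupp.sum_single_index (by simp)

lemma bform_zero_left (y : R m) : bform 0 y = 0 :=
  Finsupp.sum_zero_index

lemma bform_add_left (x1 x2 y : R m) : bform (x1 + x2) y = bform x1 y + bform x2 y :=
  Finsupp.sum_add_index' (by simp) (by intros; rw [add_mul])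

lemma bform_eq (x y : R m) : bform x y = (x * invol m y : R m).coeff 1 := by
  induction x using MonoidAlgebra.induction_linear with
  | zero => rw [bform_zero_left, zero_mul]; rfl
  | add f g hf hg =>
      rw [bform_add_left, add_mul, hf, hg]
      exact (Finsupp.add_apply _ _ _).symm
  | single g r =>
      rw [bform_single, MonoidAlgebra.single_mul_apply, mul_one, invol_apply_inv]

lemma mul_mem_code (c : R m) : c * uu m ∈ codeGen (uu m) := by
  induction c using MonoidAlgebra.induction_linear with
  | zero => rw [zero_mul]; exact (codeGen (uu m)).zero_mem
  | add f g hf hg => rw [add_mul]; exact add_mem hf hg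
  | single g r =>
      have h1 : (MonoidAlgebra.single g r : R m) * uu m
          = r • (of (ZMod 2) (Gp m) g * uu m) := by
        rw [MonoidAlgebra.of_apply, ← smul_mul_assoc, MonoidAlgebra.smul_single', mul_one]
      rw [h1]
      exact Submodule.smul_mem _ _ (Submodule.subset_span ⟨g, rfl⟩)

lemma um_sq : um m * um m = 1 := by
  unfold um
  rw [← Finset.prod_mul_distrib]
  refine Finset.prod_eq_one fun i _ => ?_
  set a := of (ZMod 2) (Gp m) (agen m i) with ha
  have ha4 : a ^ 4 = 1 := by
    rw [ha, ← map_pow, agen_pow_four, map_one]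
  have h2 : (2 : R m) = 0 := two_eq_zero m
  linear_combination (a ^ 2 + 1) * ha4 + (a ^ 2 + a ^ 3 + a ^ 4 + a ^ 5) * h2

lemma uu_sq : uu m * uu m = 0 := by
  unfold uu
  set b := of (ZMod 2) (Gp m) (hgen m) with hb
  have hb2 : b * b = 1 := by
    rw [hb, ← map_mul, ← pow_two, hgen_sq, map_one]
  have hum := um_sq m
  have h2 : (2 : R m) = 0 := two_eq_zero m
  linear_combination (um m * um m) * hb2 + hum + (b * um m + 1) * h2

lemma D_mul_um (x : R m) : Df m (x * um m) = Df m x * um m := by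
  revert x
  unfold um
  refine Finset.prod_induction _
    (fun c : MonoidAlgebra (ZMod 2) (Gp m) => ∀ x : R m, Df m (x * c) = Df m x * c)
    (fun c d hc hd x => ?_) (fun x => ?_) (fun i _ x => ?_)
  · rw [← mul_assoc, hd (x * c), hc x, mul_assoc]
  · rw [mul_one, mul_one]
  · show Df m (x * (of (ZMod 2) (Gp m) (agen m i) + of (ZMod 2) (Gp m) (agen m i) ^ 2 +
        of (ZMod 2) (Gp m) (agen m i) ^ 3)) = Df m x * (of (ZMod 2) (Gp m) (agen m i) +
        of (ZMod 2) (Gp m) (agen m i) ^ 2 + of (ZMod 2) (Gp m) (agen m i) ^ 3)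
    have e1 : ev m (agen m i) := ev_agen m i
    have e2 : ev m (agen m i ^ 2) := ev_pow m e1 2
    have e3 : ev m (agen m i ^ 3) := ev_pow m e1 3
    rw [show of (ZMod 2) (Gp m) (agen m i) ^ 2 = of (ZMod 2) (Gp m) (agen m i ^ 2) from
        (map_pow _ _ _).symm,
      show of (ZMod 2) (Gp m) (agen m i) ^ 3 = of (ZMod 2) (Gp m) (agen m i ^ 3) from
        (map_pow _ _ _).symm]
    simp only [MonoidAlgebra.of_apply, mul_add]
    rw [Df_add, Df_add, D_mul_even m _ e1, D_mul_even m _ e2, D_mul_even m _ e3]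

lemma eq_of_add_eq_zero {a b : R m} (h : a + b = 0) : b = a := by
  have hneg : b = -a := eq_neg_of_add_eq_zero_right h
  rw [hneg, neg_eq_of_add_eq_zero_left (char2 m a)]

lemma key_lemma {y : R m} (hy : uu m * y = 0) : Ef m y * uu m = y := by
  have h1 : of (ZMod 2) (Gp m) (hgen m) * um m * y = y := by
    have h0 : y + of (ZMod 2) (Gp m) (hgen m) * um m * y = 0 := by
      have := hy
      unfold uu at this
      rw [add_mul, one_mul] at this
      exact this
    exact eq_of_add_eq_zero m h0
  have h1' : (y * MonoidAlgebra.single (hgen m) 1) * um m = y := by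
    calc (y * MonoidAlgebra.single (hgen m) 1) * um m
        = of (ZMod 2) (Gp m) (hgen m) * um m * y := by rw [MonoidAlgebra.of_apply]; ring
      _ = y := h1
  have h2 : Df m y = Ef m y * MonoidAlgebra.single (hgen m) 1 * um m := by
    conv_lhs => rw [← h1']
    rw [D_mul_um, D_mul_odd m _ (hodd m)]
  calc Ef m y * uu m
      = Ef m y + Ef m y * MonoidAlgebra.single (hgen m) 1 * um m := by
        unfold uu; rw [MonoidAlgebra.of_apply]; ring
    _ = Ef m y + Df m y := by rw [h2]
    _ = y := E_add_D m y

lemma dual_iff (y : R m) :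
    (∀ x ∈ codeGen (uu m), bform x y = 0) ↔ uu m * y = 0 := by
  constructor
  · intro H
    have h0 : ∀ g : Gp m, (uu m * invol m y : R m).coeff g⁻¹ = 0 := by
      intro g
      have hx : of (ZMod 2) (Gp m) g * uu m ∈ codeGen (uu m) :=
        Submodule.subset_span ⟨g, rfl⟩
      have hb := H _ hx
      rw [bform_eq, MonoidAlgebra.of_apply, mul_assoc, MonoidAlgebra.single_mul_apply,
        one_mul, mul_one] at hb
      exact hb
    have hz : uu m * invol m y = 0 := by
      apply MonoidAlgebra.ext
      apply Finsupp.ext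
      intro g
      have := h0 g⁻¹
      rwa [inv_inv] at this
    have := congrArg (invol m) hz
    rwa [map_mul, invol_uu, invol_invol, map_zero] at this
  · intro H x hx
    have hz : uu m * invol m y = 0 := by
      have := congrArg (invol m) H
      rwa [map_mul, invol_uu, map_zero] at this
    refine Submodule.span_induction ?_ ?_ ?_ ?_ hx
    · rintro x ⟨g, rfl⟩
      show bform (of (ZMod 2) (Gp m) g * uu m) y = 0
      rw [bform_eq, MonoidAlgebra.of_apply, mul_assoc, hz, mul_zero]
      rfl
    · exact bform_zero_left m y
    · intro a b _ _ ha hb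
      rw [bform_add_left, ha, hb, add_zero]
    · intro r x _ hx
      have hr : r = 0 ∨ r = 1 := by revert r; decide
      rcases hr with rfl | rfl
      · rw [zero_smul]; exact bform_zero_left m y
      · rwa [one_smul]

end SelfDualAux

theorem code_is_self_dual (m : ℕ) (hm : 1 ≤ m) :
    (codeGen (uu m) : Set (MonoidAlgebra (ZMod 2) (Gp m))) =
      {y | ∀ x ∈ codeGen (uu m), bform x y = 0} := by
  ext y
  simp only [SetLike.mem_coe, Set.mem_setOf_eq]
  rw [SelfDualAux.dual_iff]
  constructor
  · intro hy
    refine Submodule.span_induction ?_ ?_ ?_ ?_ hy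
    · rintro x ⟨g, rfl⟩
      show uu m * (of (ZMod 2) (Gp m) g * uu m) = 0
      rw [show uu m * (of (ZMod 2) (Gp m) g * uu m)
        = of (ZMod 2) (Gp m) g * (uu m * uu m) by ring, SelfDualAux.uu_sq, mul_zero]
    · exact mul_zero _
    · intro a b _ _ ha hb
      rw [mul_add, ha, hb, add_zero]
    · intro r x _ hx
      rw [mul_smul_comm, hx, smul_zero]
  · intro hy
    rw [← SelfDualAux.key_lemma m hy]
    exact SelfDualAux.mul_mem_code m _

end
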